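/- Let n ≥ 2 and suppose n is not a power of 2. Let x_0 = (1 − 1/n, −1/n, …, −1/n) ∈ ℝ^n. Then for every finite sequence of pair-averaging operations (at arbitrary pairs of distinct indices), the resulting vector x_k is not the zero vector. Equivalently, starting from (1,0,…,0), no finite sequence of pair-averaging operations produces the constant vector (1/n, …, 1/n). -/

import Mathlib

open MeasureTheory Finset Filter
open scoped ENNReal NNReal

/-- The set of unordered pairs of distinct indices in `Fin n`, encoded as
2-element subsets of `Fin n`. -/
abbrev Pairs (n : ℕ) : Type := {s : Finset (Fin n) // s.card = 2}

instance (n : ℕ) : MeasurableSpace (Pairs n) := ⊤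

/-- The uniform probability measure on the set of pairs. -/
noncomputable def uniformPair (n : ℕ) : Measure (Pairs n) :=
  (Fintype.card (Pairs n) : ℝ≥0∞)⁻¹ • Measure.count

/-- `μ` is the infinite product over `ℕ` of the uniform measure on pairs:
its finite-dimensional marginals are the finite uniform product measures.
(This characterizes the infinite product measure uniquely.) -/
def IsProductLaw (n : ℕ) (μ : Measure (ℕ → Pairs n)) : Prop :=
  ∀ K : ℕ, μ.map (fun ω (i : Fin K) => ω i) = Measure.pi fun _ : Fin K => uniformPair n

/-- The pair-averaging operation: both coordinates in `s` (a 2-element set `{i,j}`)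
are replaced by `(x i + x j)/2`; the other coordinates are unchanged. -/
noncomputable def avgStep {n : ℕ} (s : Finset (Fin n)) (x : Fin n → ℝ) : Fin n → ℝ :=
  fun l => if l ∈ s then (∑ m ∈ s, x m) / 2 else x l

/-- The repeated averaging chain started at `x0`, driven by the pair sequence `ω`. -/
noncomputable def chain {n : ℕ} (x0 : Fin n → ℝ) (ω : ℕ → Pairs n) : ℕ → Fin n → ℝ
  | 0 => x0
  | k + 1 => avgStep (ω k).1 (chain x0 ω k)

/-- `T(k) = ∑_i |x_{k,i} - 1/n|`. -/
noncomputable def Tdist {n : ℕ} (x0 : Fin n → ℝ) (ω : ℕ → Pairs n) (k : ℕ) : ℝ :=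
  ∑ i, |chain x0 ω k i - 1 / n|

/-- The initial vector `(1,0,…,0)`. -/
def e1 (n : ℕ) : Fin n → ℝ := fun i => if i.val = 0 then 1 else 0

/-- The standard normal cumulative distribution function. -/
noncomputable def stdGaussianCDF (x : ℝ) : ℝ :=
  ∫ t in Set.Iic x, (2 * Real.pi) ^ (-(1:ℝ)/2) * Real.exp (-t ^ 2 / 2)

/-- A real is dyadic if it equals `a / 2^j` for some integer `a`. -/
def IsDyadic (x : ℝ) : Prop := ∃ (a : ℤ) (j : ℕ), x = a / 2 ^ j

lemma isDyadic_zero : IsDyadic 0 := ⟨0, 0, by norm_num⟩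

lemma isDyadic_one : IsDyadic 1 := ⟨1, 0, by norm_num⟩

lemma isDyadic_add {x y : ℝ} (hx : IsDyadic x) (hy : IsDyadic y) : IsDyadic (x + y) := by
  obtain ⟨a, j, rfl⟩ := hx
  obtain ⟨b, i, rfl⟩ := hy
  refine ⟨a * 2 ^ i + b * 2 ^ j, j + i, ?_⟩
  have hj : (2 : ℝ) ^ j ≠ 0 := by positivity
  have hi : (2 : ℝ) ^ i ≠ 0 := by positivity
  rw [div_add_div _ _ hj hi, pow_add]
  push_cast
  ring_nf

lemma isDyadic_half {x : ℝ} (hx : IsDyadic x) : IsDyadic (x / 2) := by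
  obtain ⟨a, j, rfl⟩ := hx
  exact ⟨a, j + 1, by rw [pow_succ]; ring⟩

lemma isDyadic_sum {n : ℕ} (s : Finset (Fin n)) (x : Fin n → ℝ)
    (h : ∀ m ∈ s, IsDyadic (x m)) : IsDyadic (∑ m ∈ s, x m) := by
  classical
  induction s using Finset.induction with
  | empty => simpa using isDyadic_zero
  | @insert a s hm ih =>
    rw [Finset.sum_insert hm]
    exact isDyadic_add (h _ (Finset.mem_insert_self _ _))
      (ih fun m hms => h m (Finset.mem_insert_of_mem hms))

lemma chain_dyadic {n : ℕ} (ω : ℕ → Pairs n) (k : ℕ) (i : Fin n) :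
    IsDyadic (chain (e1 n) ω k i) := by
  induction k generalizing i with
  | zero =>
    simp only [chain, e1]
    split
    · exact isDyadic_one
    · exact isDyadic_zero
  | succ k ih =>
    show IsDyadic (avgStep (ω k).1 (chain (e1 n) ω k) i)
    unfold avgStep
    split
    · exact isDyadic_half (isDyadic_sum _ _ fun m _ => ih m)
    · exact ih i

lemma not_isDyadic_inv (n : ℕ) (hn : 2 ≤ n) (hnot : ¬ ∃ r : ℕ, n = 2 ^ r) :
    ¬ IsDyadic (1 / (n : ℝ)) := by
  rintro ⟨a, j, h⟩
  have hn0 : (n : ℝ) ≠ 0 := by positivity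
  have h2 : (2 : ℝ) ^ j ≠ 0 := by positivity
  have key : ((2 : ℤ) ^ j : ℝ) = ((a * n : ℤ) : ℝ) := by
    push_cast
    field_simp at h ⊢
    linarith [h]
  have keyZ : (2 : ℤ) ^ j = a * n := by exact_mod_cast key
  have hdvd : (n : ℤ) ∣ 2 ^ j := ⟨a, by linarith [keyZ, mul_comm a (n:ℤ)]⟩
  have hdvdN : n ∣ 2 ^ j := by exact_mod_cast hdvd
  obtain ⟨i, _, hi⟩ := (Nat.dvd_prime_pow Nat.prime_two).mp hdvdN
  exact hnot ⟨i, hi⟩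

lemma avgStep_sub_const {n : ℕ} (s : Finset (Fin n)) (hs : s.card = 2)
    (x : Fin n → ℝ) (c : ℝ) :
    avgStep s (fun i => x i - c) = fun i => avgStep s x i - c := by
  funext l
  unfold avgStep
  split
  · rw [Finset.sum_sub_distrib, Finset.sum_const, hs]
    ring
  · rfl

lemma chain_sub_const {n : ℕ} (x0 : Fin n → ℝ) (c : ℝ) (ω : ℕ → Pairs n) (k : ℕ) :
    chain (fun i => x0 i - c) ω k = fun i => chain x0 ω k i - c := by
  induction k with
  | zero => rfl
  | succ k ih =>
    show avgStep (ω k).1 (chain (fun i => x0 i - c) ω k) = _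
    rw [ih, avgStep_sub_const _ (ω k).2]
    rfl

/-- **No finite termination unless `n` is a power of 2.** If `n` is not a power of `2`,
then starting from `x₀ = (1 - 1/n, -1/n, …, -1/n)` no finite sequence of pair-averaging
operations produces the zero vector; equivalently, starting from `(1,0,…,0)` no finite
sequence of pair-averaging operations produces the constant vector `(1/n,…,1/n)`. -/
theorem no_finite_termination (n : ℕ) (hn : 2 ≤ n) (hnot : ¬ ∃ r : ℕ, n = 2 ^ r)
    (ω : ℕ → Pairs n) (k : ℕ) :
    chain (fun i => (if i.val = 0 then (1 : ℝ) else 0) - 1 / n) ω k ≠ (fun _ => 0) ∧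
    chain (e1 n) ω k ≠ (fun _ => (1 / n : ℝ)) := by
  have i0 : Fin n := ⟨0, by omega⟩
  have hneq : chain (e1 n) ω k i0 ≠ 1 / n := fun h =>
    not_isDyadic_inv n hn hnot (h ▸ chain_dyadic ω k i0)
  constructor
  · intro h
    have := chain_sub_const (e1 n) (1 / n) ω k
    have h2 : chain (fun i => e1 n i - 1 / n) ω k = (fun _ => 0) := h
    rw [this] at h2
    exact hneq (by have := congrFun h2 i0; linarith [this])
  · intro h
    exact hneq (congrFun h i0)
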